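/- Fix n ∈ ℕ. For every w ≥ 0 and every x ∈ (0,1), the matrix polynomial F_w satisfies the second order differential equation x(1−x)·F_w''(x) + F_w'(x)·[[2−(n+4)x, 0],[0, 2−(n+3)x]] + (1/x)·F_w(x)·[[−1, 1−x],[1, −1+x]] = Λ_w·F_w(x), where Λ_w = [[−w(w+n+3), 0],[0, −w(w+n+4)−n−2]]. -/

import Mathlib

open scoped Matrix

/-- The Pochhammer symbol `(a)ₖ = a (a+1) ⋯ (a+k-1)`. -/
noncomputable def poch (a : ℂ) (k : ℕ) : ℂ := ∏ i ∈ Finset.range k, (a + i)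

/-- The constant `c = (w+1)(w+n+3) / ((w+1)(w+n+3)+n)`. -/
noncomputable def cP (n w : ℕ) : ℂ :=
  (((w : ℂ) + 1) * ((w : ℂ) + n + 3)) / (((w : ℂ) + 1) * ((w : ℂ) + n + 3) + n)

/-- The matrix function `F_w`, whose entries are the terminating hypergeometric series
`₃F₂(-w, w+n+3, 2; 3, 1; x)`, `₂F₁(-w, w+n+3; 3; x)`, `₂F₁(-w, w+n+4; 3; x)` and
`₃F₂(-w-1, w+n+3, c+1; 3, c; x)`. -/
noncomputable def Fmat (n w : ℕ) (x : ℝ) : Matrix (Fin 2) (Fin 2) ℂ :=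
  !![∑ k ∈ Finset.range (w + 1),
        (poch (-(w : ℂ)) k * poch ((w : ℂ) + n + 3) k * poch 2 k) /
          (poch 3 k * poch 1 k * (Nat.factorial k : ℂ)) * (x : ℂ) ^ k,
     ∑ k ∈ Finset.range (w + 1),
        (poch (-(w : ℂ)) k * poch ((w : ℂ) + n + 3) k) /
          (poch 3 k * (Nat.factorial k : ℂ)) * (x : ℂ) ^ k;
     ∑ k ∈ Finset.range (w + 1),
        (poch (-(w : ℂ)) k * poch ((w : ℂ) + n + 4) k) /
          (poch 3 k * (Nat.factorial k : ℂ)) * (x : ℂ) ^ k,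
     ∑ k ∈ Finset.range (w + 2),
        (poch (-(w : ℂ) - 1) k * poch ((w : ℂ) + n + 3) k * poch (cP n w + 1) k) /
          (poch 3 k * poch (cP n w) k * (Nat.factorial k : ℂ)) * (x : ℂ) ^ k]

/-- The entrywise derivative of `F_w`. -/
noncomputable def Fmat' (n w : ℕ) (x : ℝ) : Matrix (Fin 2) (Fin 2) ℂ :=
  Matrix.of fun i j => deriv (fun t : ℝ => Fmat n w t i j) x

/-- The entrywise second derivative of `F_w`. -/
noncomputable def Fmat'' (n w : ℕ) (x : ℝ) : Matrix (Fin 2) (Fin 2) ℂ :=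
  Matrix.of fun i j => deriv (fun t : ℝ => Fmat' n w t i j) x

lemma poch_zero (a : ℂ) : poch a 0 = 1 := by simp [poch]

lemma poch_succ (a : ℂ) (k : ℕ) : poch a (k + 1) = poch a k * (a + k) := by
  simp [poch, Finset.prod_range_succ]

lemma poch_succ' (a : ℂ) (k : ℕ) : poch a (k + 1) = a * poch (a + 1) k := by
  induction k with
  | zero => simp [poch]
  | succ k ih =>
      rw [poch_succ, ih, poch_succ]
      push_cast
      ring

lemma poch_shift (a : ℂ) (k : ℕ) : a * poch (a + 1) k = poch a k * (a + k) := by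
  rw [← poch_succ', poch_succ]

lemma poch_one (k : ℕ) : poch 1 k = (Nat.factorial k : ℂ) := by
  induction k with
  | zero => simp [poch]
  | succ k ih => rw [poch_succ, ih, Nat.factorial_succ]; push_cast; ring

lemma poch_two (k : ℕ) : poch 2 k = ((k : ℂ) + 1) * (Nat.factorial k : ℂ) := by
  induction k with
  | zero => simp [poch]
  | succ k ih => rw [poch_succ, ih, Nat.factorial_succ]; push_cast; ring

lemma poch_ne_zero_of (a : ℂ) (k : ℕ) (h : ∀ i : ℕ, a + i ≠ 0) : poch a k ≠ 0 :=
  Finset.prod_ne_zero_iff.mpr (fun i _ => h i)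

lemma poch_ofNat_ne_zero (m k : ℕ) (hm : 0 < m) : poch (m : ℂ) k ≠ 0 := by
  refine poch_ne_zero_of _ _ (fun i => ?_)
  have : (m : ℂ) + i = ((m + i : ℕ) : ℂ) := by push_cast; ring
  rw [this]
  exact Nat.cast_ne_zero.mpr (by omega)

lemma poch_three_ne_zero (k : ℕ) : poch 3 k ≠ 0 := by
  have : ((3:ℕ) : ℂ) = (3 : ℂ) := by norm_num
  simpa [this] using poch_ofNat_ne_zero 3 k (by norm_num)

lemma poch_one_ne_zero (k : ℕ) : poch 1 k ≠ 0 := by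
  have : ((1:ℕ) : ℂ) = (1 : ℂ) := by norm_num
  simpa [this] using poch_ofNat_ne_zero 1 k (by norm_num)

lemma fact_ne_zero (k : ℕ) : (Nat.factorial k : ℂ) ≠ 0 :=
  Nat.cast_ne_zero.mpr (Nat.factorial_ne_zero k)

lemma poch_neg_nat_zero (w k : ℕ) (h : w < k) : poch (-(w : ℂ)) k = 0 :=
  Finset.prod_eq_zero (Finset.mem_range.mpr h) (by simp)

lemma poch_neg_nat_zero' (w k : ℕ) (h : w + 1 < k) : poch (-(w : ℂ) - 1) k = 0 := by
  refine Finset.prod_eq_zero (Finset.mem_range.mpr (show w + 1 < k from h)) ?_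
  push_cast
  ring

/-- telescoping lemma -/
lemma telescope (A B : ℕ → ℂ) (X : ℂ) (h0 : A 0 = 0) (h : ∀ k, A (k + 1) + B k = 0) :
    ∀ M : ℕ, (∑ k ∈ Finset.range (M + 1), A k * X ^ k) +
      (∑ k ∈ Finset.range (M + 1), B k * X ^ (k + 1)) = B M * X ^ (M + 1) := by
  intro M
  induction M with
  | zero => simp [h0]
  | succ M ih =>
      rw [Finset.sum_range_succ, Finset.sum_range_succ (f := fun k => B k * X ^ (k + 1))]
      have hA : A (M + 1) = -B M := by linear_combination h M
      rw [hA]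
      linear_combination ih

/-- extend a power sum when coefficients vanish -/
lemma sum_extend (c : ℕ → ℂ) (m M : ℕ) (hmM : m ≤ M) (h : ∀ k, m ≤ k → c k = 0) (X : ℂ) :
    (∑ k ∈ Finset.range m, c k * X ^ k) = ∑ k ∈ Finset.range M, c k * X ^ k := by
  refine Finset.sum_subset (Finset.range_subset_range.mpr hmM) (fun k hk hnk => ?_)
  rw [h k (by simpa using hnk)]
  simp

lemma hasDerivAt_term (c : ℂ) (k : ℕ) (x : ℝ) :
    HasDerivAt (fun t : ℝ => c * (t : ℂ) ^ k) (c * k * (x : ℂ) ^ (k - 1)) x := by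
  have h := ((hasDerivAt_pow k ((x : ℝ) : ℂ)).comp_ofReal).const_mul c
  simpa [mul_assoc] using h

lemma hasDerivAt_psum (c : ℕ → ℂ) (M : ℕ) (x : ℝ) :
    HasDerivAt (fun t : ℝ => ∑ k ∈ Finset.range M, c k * (t : ℂ) ^ k)
      (∑ k ∈ Finset.range M, c k * k * (x : ℂ) ^ (k - 1)) x := by
  have := HasDerivAt.fun_sum (fun k (_ : k ∈ Finset.range M) => hasDerivAt_term (c k) k x)
  simpa using this

lemma hasDerivAt_term2 (c : ℂ) (k : ℕ) (x : ℝ) :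
    HasDerivAt (fun t : ℝ => c * (k : ℂ) * (t : ℂ) ^ (k - 1))
      (c * k * ((k : ℂ) - 1) * (x : ℂ) ^ (k - 2)) x := by
  have h := hasDerivAt_term (c * k) (k - 1) x
  match k with
  | 0 => simpa using hasDerivAt_const x ((0 : ℂ))
  | (k + 1) =>
      have h2 : (((k + 1 : ℕ) : ℂ) - 1) = ((k : ℕ) : ℂ) := by push_cast; ring
      simpa [h2, mul_assoc] using h

lemma hasDerivAt_psum2 (c : ℕ → ℂ) (M : ℕ) (x : ℝ) :
    HasDerivAt (fun t : ℝ => ∑ k ∈ Finset.range M, c k * k * (t : ℂ) ^ (k - 1))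
      (∑ k ∈ Finset.range M, c k * k * ((k : ℂ) - 1) * (x : ℂ) ^ (k - 2)) x := by
  have := HasDerivAt.fun_sum (fun k (_ : k ∈ Finset.range M) => hasDerivAt_term2 (c k) k x)
  simpa using this

/-- The master scalar lemma. -/
lemma master (N : ℕ) (u r t : ℕ → ℂ) (s lam : ℂ) (x : ℝ) (hx : ((x : ℝ) : ℂ) ≠ 0)
    (h0 : r 0 = 0) (huN : u N = 0) (htN : t N = 0)
    (hrec : ∀ k : ℕ, u (k + 1) * (((k : ℂ) + 1) * ((k : ℂ) + 2)) + r (k + 1)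
      = u k * ((k : ℂ) * ((k : ℂ) - 1) + s * (k : ℂ) + lam) - t k) :
    (x : ℂ) * (1 - (x : ℂ)) * (∑ k ∈ Finset.range (N + 1), u k * k * ((k : ℂ) - 1) * (x : ℂ) ^ (k - 2))
      + (2 - s * (x : ℂ)) * (∑ k ∈ Finset.range (N + 1), u k * k * (x : ℂ) ^ (k - 1))
      + (1 / (x : ℂ)) * ((∑ k ∈ Finset.range (N + 1), r k * (x : ℂ) ^ k)
          + (x : ℂ) * ∑ k ∈ Finset.range (N + 1), t k * (x : ℂ) ^ k)
      = lam * ∑ k ∈ Finset.range (N + 1), u k * (x : ℂ) ^ k := by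
  set X : ℂ := (x : ℂ) with hX
  set A : ℕ → ℂ := fun k => u k * ((k : ℂ) * ((k : ℂ) + 1)) + r k with hA
  set B : ℕ → ℂ := fun k => -(u k * ((k : ℂ) * ((k : ℂ) - 1) + s * (k : ℂ) + lam)) + t k with hB
  have hA0 : A 0 = 0 := by simp [hA, h0]
  have hAB : ∀ k, A (k + 1) + B k = 0 := by
    intro k
    have h := hrec k
    simp only [hA, hB]
    push_cast
    push_cast at h
    linear_combination h
  have hBN : B N = 0 := by simp [hB, huN, htN]
  have main : (∑ k ∈ Finset.range (N + 1), A k * X ^ k)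
      + (∑ k ∈ Finset.range (N + 1), B k * X ^ (k + 1)) = 0 := by
    rw [telescope A B X hA0 hAB N, hBN]; ring
  have E2 : X ^ 2 * (∑ k ∈ Finset.range (N + 1), u k * k * ((k : ℂ) - 1) * X ^ (k - 2))
      = ∑ k ∈ Finset.range (N + 1), u k * k * ((k : ℂ) - 1) * X ^ k := by
    rw [Finset.mul_sum]
    refine Finset.sum_congr rfl (fun k _ => ?_)
    match k with
    | 0 => simp
    | 1 => norm_num
    | (k + 2) =>
        have : (k + 2) - 2 = k := rfl
        rw [this, pow_add]
        ring
  have E1 : X * (∑ k ∈ Finset.range (N + 1), u k * k * X ^ (k - 1))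
      = ∑ k ∈ Finset.range (N + 1), u k * k * X ^ k := by
    rw [Finset.mul_sum]
    refine Finset.sum_congr rfl (fun k _ => ?_)
    match k with
    | 0 => simp
    | (k + 1) =>
        have : (k + 1) - 1 = k := rfl
        rw [this, pow_succ]
        ring
  have Ecomb : (1 - X) * (∑ k ∈ Finset.range (N + 1), u k * k * ((k : ℂ) - 1) * X ^ k)
      + (2 - s * X) * (∑ k ∈ Finset.range (N + 1), u k * k * X ^ k)
      + (∑ k ∈ Finset.range (N + 1), r k * X ^ k)
      + X * (∑ k ∈ Finset.range (N + 1), t k * X ^ k)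
      - lam * X * (∑ k ∈ Finset.range (N + 1), u k * X ^ k)
      = (∑ k ∈ Finset.range (N + 1), A k * X ^ k)
        + (∑ k ∈ Finset.range (N + 1), B k * X ^ (k + 1)) := by
    simp only [Finset.mul_sum, ← Finset.sum_add_distrib, ← Finset.sum_sub_distrib]
    refine Finset.sum_congr rfl (fun k _ => ?_)
    simp only [hA, hB]
    rw [pow_succ]
    ring
  have hxi : X * X⁻¹ = 1 := mul_inv_cancel₀ hx
  apply mul_left_cancel₀ hx
  rw [div_eq_mul_inv, one_mul]
  linear_combination (1 - X) * E2 + (2 - s * X) * E1 + Ecomb + main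
    + ((∑ k ∈ Finset.range (N + 1), r k * X ^ k)
        + X * (∑ k ∈ Finset.range (N + 1), t k * X ^ k)) * hxi

noncomputable def a1c (n w k : ℕ) : ℂ :=
  (poch (-(w : ℂ)) k * poch ((w : ℂ) + n + 3) k * poch 2 k) /
    (poch 3 k * poch 1 k * (Nat.factorial k : ℂ))

noncomputable def b1c (n w k : ℕ) : ℂ :=
  (poch (-(w : ℂ)) k * poch ((w : ℂ) + n + 3) k) / (poch 3 k * (Nat.factorial k : ℂ))

noncomputable def a2c (n w k : ℕ) : ℂ :=
  (poch (-(w : ℂ)) k * poch ((w : ℂ) + n + 4) k) / (poch 3 k * (Nat.factorial k : ℂ))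

noncomputable def b2c (n w k : ℕ) : ℂ :=
  (poch (-(w : ℂ) - 1) k * poch ((w : ℂ) + n + 3) k * poch (cP n w + 1) k) /
    (poch 3 k * poch (cP n w) k * (Nat.factorial k : ℂ))

noncomputable def dc (n w k : ℕ) : ℂ :=
  (poch (-(w : ℂ) - 1) k * poch ((w : ℂ) + n + 3) k) / (poch 3 k * (Nat.factorial k : ℂ))

section coeffs
variable (n w : ℕ)

lemma Qcast : (((w : ℂ) + 1) * ((w : ℂ) + n + 3) + n) = (((w + 1) * (w + n + 3) + n : ℕ) : ℂ) := by
  push_cast; ring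

lemma Q_ne_zero : (((w : ℂ) + 1) * ((w : ℂ) + n + 3) + n) ≠ 0 := by
  rw [Qcast]
  exact Nat.cast_ne_zero.mpr (by positivity)

lemma P_ne_zero : (((w : ℂ) + 1) * ((w : ℂ) + n + 3)) ≠ 0 := by
  have : ((w : ℂ) + 1) * ((w : ℂ) + n + 3) = (((w + 1) * (w + n + 3) : ℕ) : ℂ) := by
    push_cast; ring
  rw [this]
  exact Nat.cast_ne_zero.mpr (by positivity)

lemma hcPQ : cP n w * (((w : ℂ) + 1) * ((w : ℂ) + n + 3) + n) = ((w : ℂ) + 1) * ((w : ℂ) + n + 3) := by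
  rw [cP, div_mul_cancel₀ _ (Q_ne_zero n w)]

lemma cP_add_nat_ne_zero (i : ℕ) : cP n w + i ≠ 0 := by
  have key : (cP n w + i) * (((w : ℂ) + 1) * ((w : ℂ) + n + 3) + n)
      = (((w + 1) * (w + n + 3) + i * ((w + 1) * (w + n + 3) + n) : ℕ) : ℂ) := by
    rw [add_mul, hcPQ]
    push_cast; ring
  intro h
  rw [h, zero_mul] at key
  exact (Nat.cast_ne_zero.mpr (by positivity) : (((w + 1) * (w + n + 3) + i * ((w + 1) * (w + n + 3) + n) : ℕ) : ℂ) ≠ 0) key.symm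

lemma poch_cP_ne_zero (k : ℕ) : poch (cP n w) k ≠ 0 :=
  poch_ne_zero_of _ _ (cP_add_nat_ne_zero n w)

/-- a1 = (k+1) b1 -/
lemma ha1 (k : ℕ) : a1c n w k = ((k : ℂ) + 1) * b1c n w k := by
  rw [a1c, b1c, poch_one, poch_two]
  have h3 := poch_three_ne_zero k
  have hf := fact_ne_zero k
  field_simp

/-- recurrence for b1 -/
lemma hR1 (k : ℕ) : ((k : ℂ) + 1) * ((k : ℂ) + 3) * b1c n w (k + 1)
    = ((k : ℂ) - w) * ((k : ℂ) + w + n + 3) * b1c n w k := by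
  rw [b1c, b1c, poch_succ, poch_succ, poch_succ, Nat.factorial_succ]
  have h3 := poch_three_ne_zero k
  have hf := fact_ne_zero k
  have h3k : (3 : ℂ) + (k : ℂ) ≠ 0 := by
    have : (3 : ℂ) + (k : ℂ) = ((3 + k : ℕ) : ℂ) := by push_cast; ring
    rw [this]; exact Nat.cast_ne_zero.mpr (by omega)
  have hk1 : ((k : ℂ) + 1) ≠ 0 := by
    have : (k : ℂ) + 1 = ((k + 1 : ℕ) : ℂ) := by push_cast; ring
    rw [this]; exact Nat.cast_ne_zero.mpr (by omega)
  push_cast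
  field_simp
  ring

/-- recurrence for a2 -/
lemma hRa2 (k : ℕ) : ((k : ℂ) + 1) * ((k : ℂ) + 3) * a2c n w (k + 1)
    = ((k : ℂ) - w) * ((k : ℂ) + w + n + 4) * a2c n w k := by
  rw [a2c, a2c, poch_succ, poch_succ, poch_succ, Nat.factorial_succ]
  have h3 := poch_three_ne_zero k
  have hf := fact_ne_zero k
  have h3k : (3 : ℂ) + (k : ℂ) ≠ 0 := by
    have : (3 : ℂ) + (k : ℂ) = ((3 + k : ℕ) : ℂ) := by push_cast; ring
    rw [this]; exact Nat.cast_ne_zero.mpr (by omega)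
  have hk1 : ((k : ℂ) + 1) ≠ 0 := by
    have : (k : ℂ) + 1 = ((k + 1 : ℕ) : ℂ) := by push_cast; ring
    rw [this]; exact Nat.cast_ne_zero.mpr (by omega)
  push_cast
  field_simp
  ring

/-- recurrence for d -/
lemma hRd (k : ℕ) : ((k : ℂ) + 1) * ((k : ℂ) + 3) * dc n w (k + 1)
    = ((k : ℂ) - w - 1) * ((k : ℂ) + w + n + 3) * dc n w k := by
  rw [dc, dc, poch_succ, poch_succ, poch_succ, Nat.factorial_succ]
  have h3 := poch_three_ne_zero k
  have hf := fact_ne_zero k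
  have h3k : (3 : ℂ) + (k : ℂ) ≠ 0 := by
    have : (3 : ℂ) + (k : ℂ) = ((3 + k : ℕ) : ℂ) := by push_cast; ring
    rw [this]; exact Nat.cast_ne_zero.mpr (by omega)
  have hk1 : ((k : ℂ) + 1) ≠ 0 := by
    have : (k : ℂ) + 1 = ((k + 1 : ℕ) : ℂ) := by push_cast; ring
    rw [this]; exact Nat.cast_ne_zero.mpr (by omega)
  push_cast
  field_simp
  ring

/-- contiguous relation between d and a2 -/
lemma hRel (k : ℕ) : (-(w : ℂ) - 1) * ((w : ℂ) + n + 3) * a2c n w k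
    = ((k : ℂ) - w - 1) * ((k : ℂ) + w + n + 3) * dc n w k := by
  have e1 : poch (-(w : ℂ) - 1) k * (-(w : ℂ) - 1 + k) = (-(w : ℂ) - 1) * poch (-(w : ℂ)) k := by
    have h := poch_succ' (-(w : ℂ) - 1) k
    rw [poch_succ] at h
    have e : (-(w : ℂ) - 1 + 1) = -(w : ℂ) := by ring
    rw [e] at h
    linear_combination h
  have e2 : poch ((w : ℂ) + n + 3) k * ((w : ℂ) + n + 3 + k) = ((w : ℂ) + n + 3) * poch ((w : ℂ) + n + 4) k := by
    have h := poch_succ' ((w : ℂ) + n + 3) k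
    rw [poch_succ] at h
    have e : ((w : ℂ) + n + 3 + 1) = (w : ℂ) + n + 4 := by ring
    rw [e] at h
    linear_combination h
  have hD : poch 3 k * (Nat.factorial k : ℂ) ≠ 0 :=
    mul_ne_zero (poch_three_ne_zero k) (fact_ne_zero k)
  rw [a2c, dc, ← mul_div_assoc, ← mul_div_assoc, div_eq_div_iff hD hD]
  linear_combination (-(((k : ℂ) + w + n + 3) * poch ((w : ℂ) + n + 3) k) * e1
    - ((-(w : ℂ) - 1) * poch (-(w : ℂ)) k) * e2) * (poch 3 k * (Nat.factorial k : ℂ))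

/-- b2 in terms of d -/
lemma hb2 (k : ℕ) : (((w : ℂ) + 1) * ((w : ℂ) + n + 3)) * b2c n w k
    = dc n w k * ((((w : ℂ) + 1) * ((w : ℂ) + n + 3))
        + k * (((w : ℂ) + 1) * ((w : ℂ) + n + 3) + n)) := by
  set P : ℂ := ((w : ℂ) + 1) * ((w : ℂ) + n + 3) with hP
  set Q : ℂ := P + n with hQ
  have hc : cP n w * Q = P := hcPQ n w
  have hsh := poch_shift (cP n w) k
  have key : P * poch (cP n w + 1) k = poch (cP n w) k * (P + (k : ℂ) * Q) := by
    linear_combination (poch (cP n w) k - poch (cP n w + 1) k) * hc + Q * hsh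
  have hD : poch 3 k * (Nat.factorial k : ℂ) ≠ 0 :=
    mul_ne_zero (poch_three_ne_zero k) (fact_ne_zero k)
  have hD2 : poch 3 k * poch (cP n w) k * (Nat.factorial k : ℂ) ≠ 0 :=
    mul_ne_zero (mul_ne_zero (poch_three_ne_zero k) (poch_cP_ne_zero n w k)) (fact_ne_zero k)
  rw [b2c, dc, ← mul_div_assoc, div_mul_eq_mul_div, div_eq_div_iff hD2 hD]
  linear_combination (poch (-(w : ℂ) - 1) k * poch ((w : ℂ) + n + 3) k
    * (poch 3 k * (Nat.factorial k : ℂ))) * key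

/-- vanishing of coefficients -/
lemma a1c_vanish (k : ℕ) (h : w + 1 ≤ k) : a1c n w k = 0 := by
  rw [a1c, poch_neg_nat_zero w k (by omega)]; simp

lemma b1c_vanish (k : ℕ) (h : w + 1 ≤ k) : b1c n w k = 0 := by
  rw [b1c, poch_neg_nat_zero w k (by omega)]; simp

lemma a2c_vanish (k : ℕ) (h : w + 1 ≤ k) : a2c n w k = 0 := by
  rw [a2c, poch_neg_nat_zero w k (by omega)]; simp

lemma b2c_vanish (k : ℕ) (h : w + 2 ≤ k) : b2c n w k = 0 := by
  rw [b2c, poch_neg_nat_zero' w k (by omega)]; simp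

lemma dc_vanish (k : ℕ) (h : w + 2 ≤ k) : dc n w k = 0 := by
  rw [dc, poch_neg_nat_zero' w k (by omega)]; simp

/-- values at 0 -/
lemma a1c_zero : a1c n w 0 = 1 := by simp [a1c, poch_zero]
lemma b1c_zero : b1c n w 0 = 1 := by simp [b1c, poch_zero]
lemma a2c_zero : a2c n w 0 = 1 := by simp [a2c, poch_zero]
lemma b2c_zero : b2c n w 0 = 1 := by simp [b2c, poch_zero]

end coeffs

section hrecs
variable (n w : ℕ)

lemma hrec00 (k : ℕ) : a1c n w (k + 1) * (((k : ℂ) + 1) * ((k : ℂ) + 2)) + (b1c n w (k + 1) - a1c n w (k + 1))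
    = a1c n w k * ((k : ℂ) * ((k : ℂ) - 1) + ((n : ℂ) + 4) * (k : ℂ) + (-(w : ℂ) * ((w : ℂ) + n + 3))) - 0 := by
  have h1 := ha1 n w k
  have h2 := ha1 n w (k + 1)
  have hr := hR1 n w k
  push_cast at h2
  linear_combination ((k : ℂ) ^ 2 + 3 * (k : ℂ) + 1) * h2
    + (-((k : ℂ) ^ 2 + ((n : ℂ) + 3) * (k : ℂ) - (w : ℂ) * ((w : ℂ) + (n : ℂ) + 3))) * h1
    + ((k : ℂ) + 1) * hr

lemma hrec01 (k : ℕ) : b1c n w (k + 1) * (((k : ℂ) + 1) * ((k : ℂ) + 2)) + (a1c n w (k + 1) - b1c n w (k + 1))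
    = b1c n w k * ((k : ℂ) * ((k : ℂ) - 1) + ((n : ℂ) + 3) * (k : ℂ) + (-(w : ℂ) * ((w : ℂ) + n + 3)))
      - (b1c n w k - a1c n w k) := by
  have h1 := ha1 n w k
  have h2 := ha1 n w (k + 1)
  have hr := hR1 n w k
  push_cast at h2
  linear_combination h2 - h1 + hr

lemma hrec10 (k : ℕ) : a2c n w (k + 1) * (((k : ℂ) + 1) * ((k : ℂ) + 2)) + (b2c n w (k + 1) - a2c n w (k + 1))
    = a2c n w k * ((k : ℂ) * ((k : ℂ) - 1) + ((n : ℂ) + 4) * (k : ℂ)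
        + (-(w : ℂ) * ((w : ℂ) + n + 4) - (n : ℂ) - 2)) - 0 := by
  set K : ℂ := (k : ℂ) with hK
  set W : ℂ := (w : ℂ) with hW
  set V : ℂ := (n : ℂ) with hV
  set P : ℂ := (W + 1) * (W + V + 3) with hP
  set Q : ℂ := P + V with hQ
  have hWne : (-W - 1) ≠ 0 := by
    have : -W - 1 = -(((w + 1 : ℕ) : ℂ)) := by rw [hW]; push_cast; ring
    rw [this, neg_ne_zero]
    exact Nat.cast_ne_zero.mpr (by omega)
  have hWVne : (W + V + 3) ≠ 0 := by
    have : W + V + 3 = ((w + n + 3 : ℕ) : ℂ) := by rw [hW, hV]; push_cast; ring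
    rw [this]; exact Nat.cast_ne_zero.mpr (by omega)
  have hK1 : (K + 1) ≠ 0 := by
    have : K + 1 = ((k + 1 : ℕ) : ℂ) := by rw [hK]; push_cast; ring
    rw [this]; exact Nat.cast_ne_zero.mpr (by omega)
  have hK3 : (K + 3) ≠ 0 := by
    have : K + 3 = ((k + 3 : ℕ) : ℂ) := by rw [hK]; push_cast; ring
    rw [this]; exact Nat.cast_ne_zero.mpr (by omega)
  have hPne : P ≠ 0 := P_ne_zero n w
  have hM : P * (-W - 1) * (W + V + 3) * ((K + 1) * (K + 3)) ≠ 0 :=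
    mul_ne_zero (mul_ne_zero (mul_ne_zero hPne hWne) hWVne) (mul_ne_zero hK1 hK3)
  apply mul_left_cancel₀ hM
  have h2 := hb2 n w (k + 1)
  have h6 := hRel n w (k + 1)
  have h4 := hRd n w k
  have h5 := hRel n w k
  push_cast at h2 h6
  linear_combination ((-W - 1) * (W + V + 3) * (K + 1) * (K + 3)) * h2
    + (P * (K + 1) * (K + 3) * (K ^ 2 + 3 * K + 1)) * h6
    + (P * (K ^ 2 + 3 * K + 1) * (K - W) * (K + W + V + 4)
        + (-W - 1) * (W + V + 3) * (P + (K + 1) * Q)) * h4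
    + (-(P * (K + 1) * (K + 3) * (K ^ 2 + (V + 3) * K + (-W * (W + V + 4) - V - 2)))) * h5

lemma hrec11 (k : ℕ) : b2c n w (k + 1) * (((k : ℂ) + 1) * ((k : ℂ) + 2)) + (a2c n w (k + 1) - b2c n w (k + 1))
    = b2c n w k * ((k : ℂ) * ((k : ℂ) - 1) + ((n : ℂ) + 3) * (k : ℂ)
        + (-(w : ℂ) * ((w : ℂ) + n + 4) - (n : ℂ) - 2)) - (b2c n w k - a2c n w k) := by
  set K : ℂ := (k : ℂ) with hK
  set W : ℂ := (w : ℂ) with hW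
  set V : ℂ := (n : ℂ) with hV
  set P : ℂ := (W + 1) * (W + V + 3) with hP
  set Q : ℂ := P + V with hQ
  have hWne : (-W - 1) ≠ 0 := by
    have : -W - 1 = -(((w + 1 : ℕ) : ℂ)) := by rw [hW]; push_cast; ring
    rw [this, neg_ne_zero]
    exact Nat.cast_ne_zero.mpr (by omega)
  have hWVne : (W + V + 3) ≠ 0 := by
    have : W + V + 3 = ((w + n + 3 : ℕ) : ℂ) := by rw [hW, hV]; push_cast; ring
    rw [this]; exact Nat.cast_ne_zero.mpr (by omega)
  have hK1 : (K + 1) ≠ 0 := by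
    have : K + 1 = ((k + 1 : ℕ) : ℂ) := by rw [hK]; push_cast; ring
    rw [this]; exact Nat.cast_ne_zero.mpr (by omega)
  have hK3 : (K + 3) ≠ 0 := by
    have : K + 3 = ((k + 3 : ℕ) : ℂ) := by rw [hK]; push_cast; ring
    rw [this]; exact Nat.cast_ne_zero.mpr (by omega)
  have hPne : P ≠ 0 := P_ne_zero n w
  have hM : P * (-W - 1) * (W + V + 3) * ((K + 1) * (K + 3)) ≠ 0 :=
    mul_ne_zero (mul_ne_zero (mul_ne_zero hPne hWne) hWVne) (mul_ne_zero hK1 hK3)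
  apply mul_left_cancel₀ hM
  have h1 := hb2 n w k
  have h2 := hb2 n w (k + 1)
  have h6 := hRel n w (k + 1)
  have h4 := hRd n w k
  have h5 := hRel n w k
  push_cast at h2 h6
  linear_combination ((-W - 1) * (W + V + 3) * (K + 1) * (K + 3) * (K ^ 2 + 3 * K + 1)) * h2
    + (P * (K + 1) * (K + 3)) * h6
    + ((-W - 1) * (W + V + 3) * (K ^ 2 + 3 * K + 1) * (P + (K + 1) * Q)
        + P * (K - W) * (K + W + V + 4)) * h4
    + (-((-W - 1) * (W + V + 3) * (K + 1) * (K + 3)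
        * (K ^ 2 + (V + 2) * K + (-W * (W + V + 4) - V - 2) - 1))) * h1
    + (-(P * (K + 1) * (K + 3))) * h5

end hrecs

section entries
variable (n w : ℕ)

lemma E00 (t : ℝ) : Fmat n w t 0 0 = ∑ k ∈ Finset.range (w + 3 + 1), a1c n w k * (t : ℂ) ^ k := by
  have h1 : Fmat n w t 0 0 = ∑ k ∈ Finset.range (w + 1), a1c n w k * (t : ℂ) ^ k := by
    simp [Fmat, a1c]
  rw [h1]
  exact sum_extend _ (w + 1) (w + 3 + 1) (by omega) (fun k hk => a1c_vanish n w k hk) _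

lemma E01 (t : ℝ) : Fmat n w t 0 1 = ∑ k ∈ Finset.range (w + 3 + 1), b1c n w k * (t : ℂ) ^ k := by
  have h1 : Fmat n w t 0 1 = ∑ k ∈ Finset.range (w + 1), b1c n w k * (t : ℂ) ^ k := by
    simp [Fmat, b1c]
  rw [h1]
  exact sum_extend _ (w + 1) (w + 3 + 1) (by omega) (fun k hk => b1c_vanish n w k hk) _

lemma E10 (t : ℝ) : Fmat n w t 1 0 = ∑ k ∈ Finset.range (w + 3 + 1), a2c n w k * (t : ℂ) ^ k := by
  have h1 : Fmat n w t 1 0 = ∑ k ∈ Finset.range (w + 1), a2c n w k * (t : ℂ) ^ k := by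
    simp [Fmat, a2c]
  rw [h1]
  exact sum_extend _ (w + 1) (w + 3 + 1) (by omega) (fun k hk => a2c_vanish n w k hk) _

lemma E11 (t : ℝ) : Fmat n w t 1 1 = ∑ k ∈ Finset.range (w + 3 + 1), b2c n w k * (t : ℂ) ^ k := by
  have h1 : Fmat n w t 1 1 = ∑ k ∈ Finset.range (w + 2), b2c n w k * (t : ℂ) ^ k := by
    simp [Fmat, b2c]
  rw [h1]
  exact sum_extend _ (w + 2) (w + 3 + 1) (by omega) (fun k hk => b2c_vanish n w k hk) _

lemma D00 (x : ℝ) : Fmat' n w x 0 0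
    = ∑ k ∈ Finset.range (w + 3 + 1), a1c n w k * k * (x : ℂ) ^ (k - 1) := by
  have : (fun t : ℝ => Fmat n w t 0 0)
      = fun t : ℝ => ∑ k ∈ Finset.range (w + 3 + 1), a1c n w k * (t : ℂ) ^ k :=
    funext (E00 n w)
  rw [Fmat', Matrix.of_apply, this]
  exact (hasDerivAt_psum (a1c n w) (w + 3 + 1) x).deriv

lemma D01 (x : ℝ) : Fmat' n w x 0 1
    = ∑ k ∈ Finset.range (w + 3 + 1), b1c n w k * k * (x : ℂ) ^ (k - 1) := by
  have : (fun t : ℝ => Fmat n w t 0 1)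
      = fun t : ℝ => ∑ k ∈ Finset.range (w + 3 + 1), b1c n w k * (t : ℂ) ^ k :=
    funext (E01 n w)
  rw [Fmat', Matrix.of_apply, this]
  exact (hasDerivAt_psum (b1c n w) (w + 3 + 1) x).deriv

lemma D10 (x : ℝ) : Fmat' n w x 1 0
    = ∑ k ∈ Finset.range (w + 3 + 1), a2c n w k * k * (x : ℂ) ^ (k - 1) := by
  have : (fun t : ℝ => Fmat n w t 1 0)
      = fun t : ℝ => ∑ k ∈ Finset.range (w + 3 + 1), a2c n w k * (t : ℂ) ^ k :=
    funext (E10 n w)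
  rw [Fmat', Matrix.of_apply, this]
  exact (hasDerivAt_psum (a2c n w) (w + 3 + 1) x).deriv

lemma D11 (x : ℝ) : Fmat' n w x 1 1
    = ∑ k ∈ Finset.range (w + 3 + 1), b2c n w k * k * (x : ℂ) ^ (k - 1) := by
  have : (fun t : ℝ => Fmat n w t 1 1)
      = fun t : ℝ => ∑ k ∈ Finset.range (w + 3 + 1), b2c n w k * (t : ℂ) ^ k :=
    funext (E11 n w)
  rw [Fmat', Matrix.of_apply, this]
  exact (hasDerivAt_psum (b2c n w) (w + 3 + 1) x).deriv

lemma DD00 (x : ℝ) : Fmat'' n w x 0 0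
    = ∑ k ∈ Finset.range (w + 3 + 1), a1c n w k * k * ((k : ℂ) - 1) * (x : ℂ) ^ (k - 2) := by
  have : (fun t : ℝ => Fmat' n w t 0 0)
      = fun t : ℝ => ∑ k ∈ Finset.range (w + 3 + 1), a1c n w k * k * (t : ℂ) ^ (k - 1) :=
    funext (D00 n w)
  rw [Fmat'', Matrix.of_apply, this]
  exact (hasDerivAt_psum2 (a1c n w) (w + 3 + 1) x).deriv

lemma DD01 (x : ℝ) : Fmat'' n w x 0 1
    = ∑ k ∈ Finset.range (w + 3 + 1), b1c n w k * k * ((k : ℂ) - 1) * (x : ℂ) ^ (k - 2) := by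
  have : (fun t : ℝ => Fmat' n w t 0 1)
      = fun t : ℝ => ∑ k ∈ Finset.range (w + 3 + 1), b1c n w k * k * (t : ℂ) ^ (k - 1) :=
    funext (D01 n w)
  rw [Fmat'', Matrix.of_apply, this]
  exact (hasDerivAt_psum2 (b1c n w) (w + 3 + 1) x).deriv

lemma DD10 (x : ℝ) : Fmat'' n w x 1 0
    = ∑ k ∈ Finset.range (w + 3 + 1), a2c n w k * k * ((k : ℂ) - 1) * (x : ℂ) ^ (k - 2) := by
  have : (fun t : ℝ => Fmat' n w t 1 0)
      = fun t : ℝ => ∑ k ∈ Finset.range (w + 3 + 1), a2c n w k * k * (t : ℂ) ^ (k - 1) :=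
    funext (D10 n w)
  rw [Fmat'', Matrix.of_apply, this]
  exact (hasDerivAt_psum2 (a2c n w) (w + 3 + 1) x).deriv

lemma DD11 (x : ℝ) : Fmat'' n w x 1 1
    = ∑ k ∈ Finset.range (w + 3 + 1), b2c n w k * k * ((k : ℂ) - 1) * (x : ℂ) ^ (k - 2) := by
  have : (fun t : ℝ => Fmat' n w t 1 1)
      = fun t : ℝ => ∑ k ∈ Finset.range (w + 3 + 1), b2c n w k * k * (t : ℂ) ^ (k - 1) :=
    funext (D11 n w)
  rw [Fmat'', Matrix.of_apply, this]
  exact (hasDerivAt_psum2 (b2c n w) (w + 3 + 1) x).deriv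

end entries

/-- the matrix polynomials `F_w` satisfy
`x(1-x) F_w'' + F_w' A₁(x) + (1/x) F_w A₀(x) = Λ_w F_w` on `(0,1)`, where
`A₁(x) = diag(2-(n+4)x, 2-(n+3)x)`, `A₀(x) = [[-1, 1-x],[1, -1+x]]` and
`Λ_w = diag(-w(w+n+3), -w(w+n+4)-n-2)`. -/
theorem Fmat_differential_equation (n : ℕ) :
    ∀ w : ℕ, ∀ x ∈ Set.Ioo (0 : ℝ) 1,
      ((x : ℂ) * (1 - (x : ℂ))) • Fmat'' n w x +
        Fmat' n w x * !![2 - ((n : ℂ) + 4) * (x : ℂ), 0;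
                         0, 2 - ((n : ℂ) + 3) * (x : ℂ)] +
        (1 / (x : ℂ)) • (Fmat n w x * !![-1, 1 - (x : ℂ); 1, -1 + (x : ℂ)]) =
      !![-(w : ℂ) * ((w : ℂ) + n + 3), 0;
         0, -(w : ℂ) * ((w : ℂ) + n + 4) - (n : ℂ) - 2] * Fmat n w x := by
  intro w x hx
  have x0 : ((x : ℝ) : ℂ) ≠ 0 := Complex.ofReal_ne_zero.mpr (ne_of_gt hx.1)
  have M00 := master (w + 3) (a1c n w) (fun k => b1c n w k - a1c n w k) (fun _ => (0 : ℂ))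
    ((n : ℂ) + 4) (-(w : ℂ) * ((w : ℂ) + n + 3)) x x0
    (by simp [a1c_zero, b1c_zero])
    (a1c_vanish n w (w + 3) (by omega)) rfl
    (fun k => hrec00 n w k)
  have M01 := master (w + 3) (b1c n w) (fun k => a1c n w k - b1c n w k)
    (fun k => b1c n w k - a1c n w k)
    ((n : ℂ) + 3) (-(w : ℂ) * ((w : ℂ) + n + 3)) x x0
    (by simp [a1c_zero, b1c_zero])
    (b1c_vanish n w (w + 3) (by omega))
    (by show b1c n w (w + 3) - a1c n w (w + 3) = 0
        rw [a1c_vanish n w (w + 3) (by omega), b1c_vanish n w (w + 3) (by omega)]; ring)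
    (fun k => hrec01 n w k)
  have M10 := master (w + 3) (a2c n w) (fun k => b2c n w k - a2c n w k) (fun _ => (0 : ℂ))
    ((n : ℂ) + 4) (-(w : ℂ) * ((w : ℂ) + n + 4) - (n : ℂ) - 2) x x0
    (by simp [a2c_zero, b2c_zero])
    (a2c_vanish n w (w + 3) (by omega)) rfl
    (fun k => hrec10 n w k)
  have M11 := master (w + 3) (b2c n w) (fun k => a2c n w k - b2c n w k)
    (fun k => b2c n w k - a2c n w k)
    ((n : ℂ) + 3) (-(w : ℂ) * ((w : ℂ) + n + 4) - (n : ℂ) - 2) x x0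
    (by simp [a2c_zero, b2c_zero])
    (b2c_vanish n w (w + 3) (by omega))
    (by show b2c n w (w + 3) - a2c n w (w + 3) = 0
        rw [a2c_vanish n w (w + 3) (by omega), b2c_vanish n w (w + 3) (by omega)]; ring)
    (fun k => hrec11 n w k)
  beta_reduce at M00 M01 M10 M11
  simp only [zero_mul, mul_zero, Finset.sum_const_zero, add_zero] at M00 M10
  have hsub1 : ∑ k ∈ Finset.range (w + 3 + 1), (b1c n w k - a1c n w k) * (x : ℂ) ^ k
      = (∑ k ∈ Finset.range (w + 3 + 1), b1c n w k * (x : ℂ) ^ k)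
        - (∑ k ∈ Finset.range (w + 3 + 1), a1c n w k * (x : ℂ) ^ k) := by
    rw [← Finset.sum_sub_distrib]
    exact Finset.sum_congr rfl (fun k _ => by ring)
  have hsub1' : ∑ k ∈ Finset.range (w + 3 + 1), (a1c n w k - b1c n w k) * (x : ℂ) ^ k
      = (∑ k ∈ Finset.range (w + 3 + 1), a1c n w k * (x : ℂ) ^ k)
        - (∑ k ∈ Finset.range (w + 3 + 1), b1c n w k * (x : ℂ) ^ k) := by
    rw [← Finset.sum_sub_distrib]
    exact Finset.sum_congr rfl (fun k _ => by ring)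
  have hsub2 : ∑ k ∈ Finset.range (w + 3 + 1), (b2c n w k - a2c n w k) * (x : ℂ) ^ k
      = (∑ k ∈ Finset.range (w + 3 + 1), b2c n w k * (x : ℂ) ^ k)
        - (∑ k ∈ Finset.range (w + 3 + 1), a2c n w k * (x : ℂ) ^ k) := by
    rw [← Finset.sum_sub_distrib]
    exact Finset.sum_congr rfl (fun k _ => by ring)
  have hsub2' : ∑ k ∈ Finset.range (w + 3 + 1), (a2c n w k - b2c n w k) * (x : ℂ) ^ k
      = (∑ k ∈ Finset.range (w + 3 + 1), a2c n w k * (x : ℂ) ^ k)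
        - (∑ k ∈ Finset.range (w + 3 + 1), b2c n w k * (x : ℂ) ^ k) := by
    rw [← Finset.sum_sub_distrib]
    exact Finset.sum_congr rfl (fun k _ => by ring)
  ext i j
  fin_cases i <;> fin_cases j <;>
    simp only [Fin.mk_zero, Fin.mk_one, Fin.isValue, Matrix.add_apply, Matrix.smul_apply,
      Matrix.mul_apply, Fin.sum_univ_two, smul_eq_mul, Matrix.cons_val', Matrix.cons_val_zero,
      Matrix.cons_val_one, Matrix.head_cons, Matrix.head_fin_const, Matrix.empty_val',
      Matrix.cons_val_fin_one, Matrix.of_apply]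
  · rw [DD00, D00, D01, E00, E01]
    linear_combination M00 - (1 / (x : ℂ)) * hsub1
  · rw [DD01, D00, D01, E00, E01]
    linear_combination M01 - (1 / (x : ℂ)) * hsub1' - ((1 / (x : ℂ)) * (x : ℂ)) * hsub1
  · rw [DD10, D10, D11, E10, E11]
    linear_combination M10 - (1 / (x : ℂ)) * hsub2
  · rw [DD11, D10, D11, E10, E11]
    linear_combination M11 - (1 / (x : ℂ)) * hsub2' - ((1 / (x : ℂ)) * (x : ℂ)) * hsub2
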